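/- Let N be the free R-module on the set of cyclic paths in the double quiver Q̄ (closed paths up to cyclic rotation), with 2 invertible in R. Define br⁺(a₁⋯a_m ⊗ b₁⋯b_n) = ∑_{i=1}^m ∑_{j=1}^n ⟨a_i, b_j⟩ · a_i a_{i+1} ⋯ a_{i-1} a_i b_j b_{j+1} ⋯ b_{j-1} b_j (indices cyclic), and br⁺ = 0 whenever one argument is a constant path. Then br⁺ is antisymmetric and satisfies the Jacobi identity, i.e., (N, br⁺) is a Lie algebra over R. -/

import Mathlib

open scoped Classical

variable {V E : Type*}

/-- Source map of the double quiver: the arrows are `E ⊕ E`, with `Sum.inl a` the original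
arrow `a : s a → t a` and `Sum.inr a` its double `ā : t a → s a`. -/
def dsrc (s t : E → V) : E ⊕ E → V
  | Sum.inl a => s a
  | Sum.inr a => t a

/-- Target map of the double quiver. -/
def dtgt (s t : E → V) : E ⊕ E → V
  | Sum.inl a => t a
  | Sum.inr a => s a

/-- The canonical antisymmetric pairing `⟨-,-⟩` on arrows of the double quiver:
`⟨a, ā⟩ = 1 = -⟨ā, a⟩` for an original arrow `a`, and all other pairings vanish. -/
def dpair [DecidableEq E] : E ⊕ E → E ⊕ E → ℤ
  | Sum.inl a, Sum.inr b => if a = b then 1 else 0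
  | Sum.inr a, Sum.inl b => if a = b then -1 else 0
  | Sum.inl _, Sum.inl _ => 0
  | Sum.inr _, Sum.inr _ => 0

/-- A (nonempty) closed path in the double quiver, encoded as a periodic sequence of
composable arrows: `f i` is the `(i mod len)`-th arrow of the path. -/
structure RawLoop (s t : E → V) : Type _ where
  len : ℕ
  len_pos : 0 < len
  f : ℕ → E ⊕ E
  periodic : ∀ i, f (i + len) = f i
  closed : ∀ i, dtgt s t (f i) = dsrc s t (f (i + 1))

/-- Two closed paths are identified when they differ by a cyclic rotation; the quotient
`Quot (RotRel s t)` is the set of (nonconstant) cyclic paths. -/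
def RotRel (s t : E → V) (p q : RawLoop s t) : Prop :=
  p.len = q.len ∧ ∃ k, ∀ i, q.f i = p.f (i + k)

/-- The sequence of arrows `a_i a_{i+1} ⋯ a_{i-1} a_i b_j b_{j+1} ⋯ b_{j-1} b_j` (of length
`p.len + q.len + 2`) obtained from the closed paths `p`, `q` by inserting the pair of arrows
`a_i`, `b_j` at the chosen intersection. -/
def insSeq (s t : E → V) (p q : RawLoop s t) (i j : ℕ) : ℕ → E ⊕ E := fun r =>
  if r % (p.len + q.len + 2) ≤ p.len then p.f (i + r % (p.len + q.len + 2))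
  else q.f (j + (r % (p.len + q.len + 2) - (p.len + 1)))

/-- The term `⟨a_i, b_j⟩ • (a_i a_{i+1} ⋯ a_{i-1} a_i b_j b_{j+1} ⋯ b_{j-1} b_j)` of the
augmented necklace bracket, as an element of the free module on constant and cyclic paths. -/
noncomputable def insTerm (R : Type*) [CommRing R] [DecidableEq E] (s t : E → V)
    (p q : RawLoop s t) (i j : ℕ) : (V ⊕ Quot (RotRel s t)) →₀ R :=
  if h : ∀ r, dtgt s t (insSeq s t p q i j r) = dsrc s t (insSeq s t p q i j (r + 1)) then
    dpair (p.f i) (q.f j) •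
      Finsupp.single
        (Sum.inr (Quot.mk (RotRel s t)
          { len := p.len + q.len + 2
            len_pos := by omega
            f := insSeq s t p q i j
            periodic := fun r => by simp only [insSeq, Nat.add_mod_right]
            closed := h })) (1 : R)
  else 0

section AuxLemmas

-- nat helpers
lemma mod_compute_lo (r d M u : ℕ) (hu : r % M = u) (h : u + d < M) : (r + d) % M = u + d := by
  rw [← Nat.mod_add_mod, hu, Nat.mod_eq_of_lt h]

lemma mod_compute_hi (r d M u : ℕ) (hu : r % M = u) (h1 : M ≤ u + d) (h2 : u + d < 2 * M) :
    (r + d) % M = u + d - M := by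
  rw [← Nat.mod_add_mod, hu, Nat.mod_eq_sub_mod h1, Nat.mod_eq_of_lt (by omega)]

variable [DecidableEq E] {s t : E → V}

lemma dpair_antisymm (x y : E ⊕ E) : dpair x y = - dpair y x := by
  rcases x with a | a <;> rcases y with b | b <;> simp [dpair, eq_comm] <;> split <;> simp

lemma dpair_src_tgt {x y : E ⊕ E} (h : dpair x y ≠ 0) :
    dtgt s t x = dsrc s t y ∧ dtgt s t y = dsrc s t x := by
  rcases x with a | a <;> rcases y with b | b <;> simp [dpair] at h <;>
    subst h <;> simp [dsrc, dtgt]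

omit [DecidableEq E] in
lemma loop_f_add (p : RawLoop s t) (x : ℕ) : p.f (x + p.len) = p.f x := p.periodic x

omit [DecidableEq E] in
lemma loop_f_madd (p : RawLoop s t) (x c : ℕ) : p.f (x + c * p.len) = p.f x := by
  induction c with
  | zero => simp
  | succ c ih => rw [show x + (c+1) * p.len = (x + c * p.len) + p.len by ring,
      loop_f_add, ih]

omit [DecidableEq E] in
lemma loop_f_mod (p : RawLoop s t) (x : ℕ) : p.f (x % p.len) = p.f x := by
  conv_rhs => rw [← Nat.mod_add_div x p.len]
  rw [mul_comm, loop_f_madd]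

omit [DecidableEq E] in
lemma loop_f_congr (p : RawLoop s t) {x y : ℕ} (h : x % p.len = y % p.len) :
    p.f x = p.f y := by
  rw [← loop_f_mod p x, h, loop_f_mod]

omit [DecidableEq E] in
lemma loop_eq {p q : RawLoop s t} (h1 : p.len = q.len) (h2 : p.f = q.f) : p = q := by
  cases p; cases q; simp_all

omit [DecidableEq E] in
lemma insSeq_mod (p q : RawLoop s t) (i j r : ℕ) :
    insSeq s t p q i j r = insSeq s t p q i j (r % (p.len + q.len + 2)) := by
  unfold insSeq
  rw [Nat.mod_mod_of_dvd _ dvd_rfl]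


set_option linter.unusedSectionVars false

lemma insSeq_eval_l (p q : RawLoop s t) (i j r x : ℕ) (hx : x ≤ p.len)
    (hr : r % (p.len + q.len + 2) = x) : insSeq s t p q i j r = p.f (i + x) := by
  unfold insSeq; rw [hr, if_pos hx]

lemma insSeq_eval_r (p q : RawLoop s t) (i j r x : ℕ) (hx1 : p.len < x)
    (hr : r % (p.len + q.len + 2) = x) :
    insSeq s t p q i j r = q.f (j + (x - (p.len + 1))) := by
  unfold insSeq; rw [hr, if_neg (by omega)]

lemma insSeq_shift₁ (p q : RawLoop s t) (i j : ℕ) :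
    insSeq s t p q (i + p.len) j = insSeq s t p q i j := by
  funext r; unfold insSeq
  split
  · rw [show i + p.len + r % (p.len + q.len + 2) = (i + r % (p.len + q.len + 2)) + p.len by omega,
      loop_f_add]
  · rfl

lemma insSeq_shift₂ (p q : RawLoop s t) (i j : ℕ) :
    insSeq s t p q i (j + q.len) = insSeq s t p q i j := by
  funext r; unfold insSeq
  split
  · rfl
  · rw [show j + q.len + (r % (p.len + q.len + 2) - (p.len + 1))
        = (j + (r % (p.len + q.len + 2) - (p.len + 1))) + q.len by omega, loop_f_add]

/-- Composability of the inserted sequence, when the pairing is nonzero. -/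
lemma comp_of_dpair (p q : RawLoop s t) (i j : ℕ) (h : dpair (p.f i) (q.f j) ≠ 0) :
    ∀ r, dtgt s t (insSeq s t p q i j r) = dsrc s t (insSeq s t p q i j (r + 1)) := by
  obtain ⟨h1, h2⟩ := dpair_src_tgt (s := s) (t := t) h
  intro r
  set M := p.len + q.len + 2 with hM
  have hu : r % M < M := Nat.mod_lt _ (by omega)
  set u := r % M with hud
  have hru : r % M = u := rfl
  rcases Nat.lt_or_ge u p.len with hc | hc
  · rw [insSeq_eval_l p q i j r u (by omega) hru,
      insSeq_eval_l p q i j (r+1) (u+1) (by omega) (mod_compute_lo r 1 M u hru (by omega))]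
    exact p.closed (i + u)
  rcases Nat.eq_or_lt_of_le hc with hc | hc
  · rw [insSeq_eval_l p q i j r u (by omega) hru,
      insSeq_eval_r p q i j (r+1) (u+1) (by omega) (mod_compute_lo r 1 M u hru (by omega))]
    rw [show u = p.len from hc.symm, show i + p.len = i + p.len by rfl, loop_f_add,
      show j + (p.len + 1 - (p.len + 1)) = j + 0 by omega, Nat.add_zero]
    exact h1
  rcases Nat.lt_or_ge u (M - 1) with hc2 | hc2
  · rw [insSeq_eval_r p q i j r u (by omega) hru,
      insSeq_eval_r p q i j (r+1) (u+1) (by omega) (mod_compute_lo r 1 M u hru (by omega))]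
    rw [show u + 1 - (p.len + 1) = (u - (p.len+1)) + 1 by omega, ← Nat.add_assoc]
    exact q.closed (j + (u - (p.len + 1)))
  · have hu2 : u = p.len + q.len + 1 := by omega
    rw [insSeq_eval_r p q i j r u (by omega) hru,
      insSeq_eval_l p q i j (r+1) 0 (by omega)
        (by rw [mod_compute_hi r 1 M u hru (by omega) (by omega)]; omega)]
    rw [hu2, show j + (p.len + q.len + 1 - (p.len + 1)) = j + q.len by omega, loop_f_add,
      Nat.add_zero]
    exact h2

/-- Word-level rotation lemma for antisymmetry. -/
lemma word_swap (p q : RawLoop s t) (i j : ℕ) :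
    ∀ r, insSeq s t q p j i r = insSeq s t p q i j (r + (p.len + 1)) := by
  intro r
  set M := p.len + q.len + 2 with hM
  have hM' : q.len + p.len + 2 = M := by omega
  have hu : r % M < M := Nat.mod_lt _ (by omega)
  set u := r % M with hud
  have hru : r % (q.len + p.len + 2) = u := by rw [hM']
  have hru' : r % M = u := rfl
  rcases Nat.lt_or_ge u (q.len + 1) with hc | hc
  · rw [insSeq_eval_l q p j i r u (by omega) hru,
      insSeq_eval_r p q i j (r + (p.len+1)) (u + (p.len+1)) (by omega)
        (mod_compute_lo r (p.len+1) M u hru' (by omega))]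
    congr 1; omega
  · rw [insSeq_eval_r q p j i r u (by omega) hru,
      insSeq_eval_l p q i j (r + (p.len+1)) (u - (q.len + 1)) (by omega)
        (by rw [mod_compute_hi r (p.len+1) M u hru' (by omega) (by omega)]; omega)]


/-- The closed path obtained by inserting `q` into `p` at the intersection `(i, j)`. -/
def insLoop (p q : RawLoop s t) (i j : ℕ)
    (h : ∀ r, dtgt s t (insSeq s t p q i j r) = dsrc s t (insSeq s t p q i j (r + 1))) :
    RawLoop s t :=
  { len := p.len + q.len + 2
    len_pos := by omega
    f := insSeq s t p q i j
    periodic := fun r => by simp only [insSeq, Nat.add_mod_right]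
    closed := h }

@[simp] lemma insLoop_len (p q : RawLoop s t) (i j : ℕ) (h) :
    (insLoop p q i j h).len = p.len + q.len + 2 := rfl

@[simp] lemma insLoop_f (p q : RawLoop s t) (i j : ℕ) (h) :
    (insLoop p q i j h).f = insSeq s t p q i j := rfl

/-- The key word-level rotation lemma for the Jacobi identity. -/
lemma word_core (p q z : RawLoop s t) (i j l k : ℕ) (hk : k ≤ p.len)
    (h₁ : ∀ r, dtgt s t (insSeq s t p q i j r) = dsrc s t (insSeq s t p q i j (r + 1)))
    (h₂ : ∀ r, dtgt s t (insSeq s t z p l (i + k) r) = dsrc s t (insSeq s t z p l (i + k) (r + 1))) :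
    ∀ r, insSeq s t (insLoop z p l (i + k) h₂) q (z.len + 1 + (p.len - k)) j r
      = insSeq s t (insLoop p q i j h₁) z k l (r + (p.len + q.len + 2 - k)) := by
  intro r
  set M := p.len + q.len + z.len + 4 with hM
  set D := p.len + q.len + 2 - k with hD
  set K := z.len + 1 + (p.len - k) with hK
  have e1 : (insLoop z p l (i + k) h₂).len + q.len + 2 = M := by
    simp only [insLoop_len]; omega
  have e2 : (insLoop p q i j h₁).len + z.len + 2 = M := by
    simp only [insLoop_len]; omega
  have hu : r % M < M := Nat.mod_lt _ (by omega)
  set u := r % M with hud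
  have hru : r % M = u := rfl
  have hru1 : r % ((insLoop z p l (i + k) h₂).len + q.len + 2) = u := by rw [e1]
  rcases Nat.lt_or_ge u (k + 1) with hc | hc
  · -- Case A : u ≤ k
    rw [insSeq_eval_l _ q _ j r u (by simp only [insLoop_len]; omega) hru1]
    rw [insSeq_eval_l _ z k l (r + D) (u + D) (by simp only [insLoop_len]; omega)
      (by rw [e2]; exact mod_compute_lo r D M u hru (by omega))]
    simp only [insLoop_f]
    rw [insSeq_eval_r z p l (i + k) (K + u) (K + u) (by omega)
      (Nat.mod_eq_of_lt (by omega))]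
    rw [insSeq_eval_l p q i j (k + (u + D)) u (by omega)
      (by rw [show k + (u + D) = u + (p.len + q.len + 2) by omega, Nat.add_mod_right]
          exact Nat.mod_eq_of_lt (by omega))]
    rw [show i + k + (K + u - (z.len + 1)) = (i + u) + p.len by omega, loop_f_add]
  rcases Nat.lt_or_ge u (k + z.len + 2) with hc2 | hc2
  · -- Case B : k + 1 ≤ u ≤ k + z.len + 1
    rw [insSeq_eval_l _ q _ j r u (by simp only [insLoop_len]; omega) hru1]
    rw [insSeq_eval_r _ z k l (r + D) (u + D) (by simp only [insLoop_len]; omega)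
      (by rw [e2]; exact mod_compute_lo r D M u hru (by omega))]
    simp only [insLoop_f, insLoop_len]
    rw [insSeq_eval_l z p l (i + k) (K + u) (u - k - 1) (by omega)
      (by rw [show K + u = (u - k - 1) + (z.len + p.len + 2) by omega, Nat.add_mod_right]
          exact Nat.mod_eq_of_lt (by omega))]
    congr 1; omega
  rcases Nat.lt_or_ge u (z.len + p.len + 3) with hc3 | hc3
  · -- Case C : k + z.len + 2 ≤ u ≤ z.len + p.len + 2
    rw [insSeq_eval_l _ q _ j r u (by simp only [insLoop_len]; omega) hru1]
    rw [insSeq_eval_l _ z k l (r + D) (u + D - M) (by simp only [insLoop_len]; omega)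
      (by rw [e2]; exact mod_compute_hi r D M u hru (by omega) (by omega))]
    simp only [insLoop_f]
    rw [insSeq_eval_r z p l (i + k) (K + u) (u - k - 1) (by omega)
      (by rw [show K + u = (u - k - 1) + (z.len + p.len + 2) by omega, Nat.add_mod_right]
          exact Nat.mod_eq_of_lt (by omega))]
    rw [insSeq_eval_l p q i j (k + (u + D - M)) (k + (u + D - M)) (by omega)
      (Nat.mod_eq_of_lt (by omega))]
    congr 1; omega
  · -- Case D : z.len + p.len + 3 ≤ u < M
    rw [insSeq_eval_r _ q _ j r u (by simp only [insLoop_len]; omega) hru1]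
    rw [insSeq_eval_l _ z k l (r + D) (u + D - M) (by simp only [insLoop_len]; omega)
      (by rw [e2]; exact mod_compute_hi r D M u hru (by omega) (by omega))]
    simp only [insLoop_f, insLoop_len]
    rw [insSeq_eval_r p q i j (k + (u + D - M)) (k + (u + D - M)) (by omega)
      (Nat.mod_eq_of_lt (by omega))]
    congr 1; omega


/-- Shifting the summation index by `k` for an `m`-periodic function. -/
lemma sum_shift {N : Type*} [AddCommGroup N] (m : ℕ) (g : ℕ → N)
    (hg : ∀ x, g (x + m) = g x) :
    ∀ k, ∑ i ∈ Finset.range m, g (i + k) = ∑ i ∈ Finset.range m, g i := by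
  intro k
  induction k with
  | zero => simp
  | succ k ih =>
    have step : ∑ i ∈ Finset.range m, g ((i + 1) + k) = ∑ i ∈ Finset.range m, g (i + k) := by
      have h1 := Finset.sum_range_succ' (fun i => g (i + k)) m
      have h2 := Finset.sum_range_succ (fun i => g (i + k)) m
      have h3 : g (m + k) = g (0 + k) := by
        rw [zero_add, show m + k = k + m by omega, hg]
      have h4 : (∑ i ∈ Finset.range m, g (i + 1 + k)) + g (0 + k)
          = (∑ i ∈ Finset.range m, g (i + k)) + g (0 + k) := by
        rw [← h1, h2, h3]
      exact add_right_cancel h4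
    rw [show (∑ i ∈ Finset.range m, g (i + (k+1))) = ∑ i ∈ Finset.range m, g ((i+1) + k) from
      Finset.sum_congr rfl fun i _ => by rw [show i + (k+1) = (i+1) + k by omega], step, ih]

/-- Reordering a fourfold sum. -/
lemma sum4_swap {N : Type*} [AddCommMonoid N] {A B C D : Finset ℕ} (F : ℕ → ℕ → ℕ → ℕ → N) :
    (∑ i ∈ A, ∑ j ∈ B, ∑ k ∈ C, ∑ l ∈ D, F i j k l)
      = ∑ l ∈ D, ∑ k ∈ C, ∑ i ∈ A, ∑ j ∈ B, F i j k l := by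
  calc (∑ i ∈ A, ∑ j ∈ B, ∑ k ∈ C, ∑ l ∈ D, F i j k l)
      = ∑ i ∈ A, ∑ k ∈ C, ∑ j ∈ B, ∑ l ∈ D, F i j k l :=
        Finset.sum_congr rfl fun i _ => Finset.sum_comm
    _ = ∑ i ∈ A, ∑ k ∈ C, ∑ l ∈ D, ∑ j ∈ B, F i j k l :=
        Finset.sum_congr rfl fun i _ => Finset.sum_congr rfl fun k _ => Finset.sum_comm
    _ = ∑ i ∈ A, ∑ l ∈ D, ∑ k ∈ C, ∑ j ∈ B, F i j k l :=
        Finset.sum_congr rfl fun i _ => Finset.sum_comm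
    _ = ∑ l ∈ D, ∑ i ∈ A, ∑ k ∈ C, ∑ j ∈ B, F i j k l := Finset.sum_comm
    _ = ∑ l ∈ D, ∑ k ∈ C, ∑ i ∈ A, ∑ j ∈ B, F i j k l :=
        Finset.sum_congr rfl fun l _ => Finset.sum_comm

end AuxLemmas

section ModuleLemmas

set_option linter.unusedSectionVars false

variable (R : Type*) [CommRing R] [DecidableEq E] {s t : E → V}

/-- Basis vector of a cyclic path. -/
noncomputable def eL (p : RawLoop s t) : (V ⊕ Quot (RotRel s t)) →₀ R :=
  Finsupp.single (Sum.inr (Quot.mk (RotRel s t) p)) 1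

lemma insTerm_pos (p q : RawLoop s t) (i j : ℕ)
    (h : ∀ r, dtgt s t (insSeq s t p q i j r) = dsrc s t (insSeq s t p q i j (r + 1))) :
    insTerm R s t p q i j = dpair (p.f i) (q.f j) • eL R (insLoop p q i j h) := by
  unfold insTerm
  rw [dif_pos h]
  rfl

lemma insTerm_neg (p q : RawLoop s t) (i j : ℕ)
    (h : ¬ ∀ r, dtgt s t (insSeq s t p q i j r) = dsrc s t (insSeq s t p q i j (r + 1))) :
    insTerm R s t p q i j = 0 := by
  unfold insTerm
  rw [dif_neg h]

lemma insTerm_zero (p q : RawLoop s t) (i j : ℕ) (h : dpair (p.f i) (q.f j) = 0) :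
    insTerm R s t p q i j = 0 := by
  unfold insTerm
  split
  · rw [h, zero_smul]
  · rfl

lemma insTerm_swap (p q : RawLoop s t) (i j : ℕ) :
    insTerm R s t q p j i = - insTerm R s t p q i j := by
  by_cases h : dpair (p.f i) (q.f j) = 0
  · rw [insTerm_zero R p q i j h, insTerm_zero R q p j i
      (by rw [dpair_antisymm, h, neg_zero]), neg_zero]
  · have h' : dpair (q.f j) (p.f i) ≠ 0 := by
      rw [dpair_antisymm]; simpa using h
    have c1 := comp_of_dpair p q i j h
    have c2 := comp_of_dpair q p j i h'
    rw [insTerm_pos R q p j i c2, insTerm_pos R p q i j c1]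
    have hq : Quot.mk (RotRel s t) (insLoop p q i j c1)
        = Quot.mk (RotRel s t) (insLoop q p j i c2) :=
      Quot.sound ⟨by simp only [insLoop_len]; omega,
        ⟨p.len + 1, fun r => word_swap p q i j r⟩⟩
    unfold eL
    rw [← hq, dpair_antisymm (q.f j) (p.f i), neg_smul]


lemma insLoop_f_left (p q : RawLoop s t) (i j k : ℕ) (hk : k ≤ p.len) (h) :
    (insLoop p q i j h).f k = p.f (i + k) := by
  rw [insLoop_f]
  exact insSeq_eval_l p q i j k k hk (Nat.mod_eq_of_lt (by omega))

lemma insLoop_f_junction (z p : RawLoop s t) (l i' x : ℕ) (hx : x ≤ p.len) (h) :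
    (insLoop z p l i' h).f (z.len + 1 + x) = p.f (i' + x) := by
  rw [insLoop_f]
  rw [insSeq_eval_r z p l i' (z.len + 1 + x) (z.len + 1 + x) (by omega)
    (Nat.mod_eq_of_lt (by omega))]
  congr 1
  omega

/-- The summand of the doubly-iterated bracket. -/
noncomputable def T2 (p q z : RawLoop s t) (i j k l : ℕ) : (V ⊕ Quot (RotRel s t)) →₀ R :=
  if h : ∀ r, dtgt s t (insSeq s t p q i j r) = dsrc s t (insSeq s t p q i j (r + 1)) then
    dpair (p.f i) (q.f j) • insTerm R s t (insLoop p q i j h) z k l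
  else 0

lemma T2_cancel (p q z : RawLoop s t) (i j l k : ℕ) (hk : k ≤ p.len) :
    T2 R p q z i j k l + T2 R z p q l (i + k) (z.len + 1 + (p.len - k)) j = 0 := by
  by_cases h1 : dpair (p.f i) (q.f j) = 0
  · have e1 : T2 R p q z i j k l = 0 := by
      unfold T2; split
      · rw [h1, zero_smul]
      · rfl
    have e2 : T2 R z p q l (i + k) (z.len + 1 + (p.len - k)) j = 0 := by
      unfold T2; split
      · next h₂ =>
        rw [insTerm_zero]
        · rw [smul_zero]
        · rw [insLoop_f_junction z p l (i + k) (p.len - k) (by omega) h₂,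
            show i + k + (p.len - k) = i + p.len by omega, loop_f_add]
          exact h1
      · rfl
    rw [e1, e2, add_zero]
  by_cases h2 : dpair (p.f (i + k)) (z.f l) = 0
  · have e1 : T2 R p q z i j k l = 0 := by
      unfold T2; split
      · next h₁ =>
        rw [insTerm_zero]
        · rw [smul_zero]
        · rw [insLoop_f_left p q i j k hk h₁]
          exact h2
      · rfl
    have e2 : T2 R z p q l (i + k) (z.len + 1 + (p.len - k)) j = 0 := by
      unfold T2; split
      · rw [show dpair (z.f l) (p.f (i + k)) = 0 by
          rw [dpair_antisymm, h2, neg_zero], zero_smul]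
      · rfl
    rw [e1, e2, add_zero]
  · have h1' : dpair (z.f l) (p.f (i + k)) ≠ 0 := by
      rw [dpair_antisymm]; simpa using h2
    have c1 := comp_of_dpair p q i j h1
    have c2 := comp_of_dpair z p l (i + k) h1'
    unfold T2
    rw [dif_pos c1, dif_pos c2]
    have hA : dpair ((insLoop p q i j c1).f k) (z.f l) ≠ 0 := by
      rw [insLoop_f_left p q i j k hk c1]; exact h2
    have hB : dpair ((insLoop z p l (i + k) c2).f (z.len + 1 + (p.len - k))) (q.f j) ≠ 0 := by
      rw [insLoop_f_junction z p l (i + k) (p.len - k) (by omega) c2,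
        show i + k + (p.len - k) = i + p.len by omega, loop_f_add]
      exact h1
    have cA := comp_of_dpair (insLoop p q i j c1) z k l hA
    have cB := comp_of_dpair (insLoop z p l (i + k) c2) q (z.len + 1 + (p.len - k)) j hB
    rw [insTerm_pos R _ z k l cA, insTerm_pos R _ q (z.len + 1 + (p.len - k)) j cB]
    have hq : Quot.mk (RotRel s t) (insLoop (insLoop p q i j c1) z k l cA)
        = Quot.mk (RotRel s t) (insLoop (insLoop z p l (i + k) c2) q (z.len + 1 + (p.len - k)) j cB) :=
      Quot.sound ⟨by simp only [insLoop_len]; omega,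
        ⟨p.len + q.len + 2 - k, fun r => word_core p q z i j l k hk c1 c2 r⟩⟩
    unfold eL
    rw [← hq]
    rw [insLoop_f_left p q i j k hk c1,
      insLoop_f_junction z p l (i + k) (p.len - k) (by omega) c2,
      show i + k + (p.len - k) = i + p.len by omega, loop_f_add,
      dpair_antisymm (z.f l) (p.f (i + k)), neg_smul, smul_comm]
    exact add_neg_cancel _

lemma T2_congr_j (p q z : RawLoop s t) (i j k l : ℕ) :
    T2 R p q z i (j + q.len) k l = T2 R p q z i j k l := by
  have hf : insSeq s t p q i (j + q.len) = insSeq s t p q i j := insSeq_shift₂ p q i j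
  by_cases h : ∀ r, dtgt s t (insSeq s t p q i j r) = dsrc s t (insSeq s t p q i j (r + 1))
  · have h' : ∀ r, dtgt s t (insSeq s t p q i (j + q.len) r)
        = dsrc s t (insSeq s t p q i (j + q.len) (r + 1)) := by
      simpa only [hf] using h
    unfold T2
    rw [dif_pos h', dif_pos h]
    have hL : insLoop p q i (j + q.len) h' = insLoop p q i j h :=
      loop_eq (by simp only [insLoop_len]) (by simp only [insLoop_f, hf])
    rw [hL, loop_f_add]
  · have h' : ¬ ∀ r, dtgt s t (insSeq s t p q i (j + q.len) r)
        = dsrc s t (insSeq s t p q i (j + q.len) (r + 1)) := by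
      simpa only [hf] using h
    unfold T2
    rw [dif_neg h', dif_neg h]


lemma pair_sum (p q z : RawLoop s t) :
    (∑ i ∈ Finset.range p.len, ∑ j ∈ Finset.range q.len, ∑ k ∈ Finset.range (p.len + 1),
        ∑ l ∈ Finset.range z.len, T2 R p q z i j k l)
      + (∑ l ∈ Finset.range z.len, ∑ i ∈ Finset.range p.len, ∑ x ∈ Finset.range (p.len + 1),
        ∑ j ∈ Finset.range q.len, T2 R z p q l i (z.len + 1 + x) j) = 0 := by
  have S2eq : (∑ l ∈ Finset.range z.len, ∑ i ∈ Finset.range p.len, ∑ x ∈ Finset.range (p.len + 1),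
        ∑ j ∈ Finset.range q.len, T2 R z p q l i (z.len + 1 + x) j)
      = ∑ l ∈ Finset.range z.len, ∑ k ∈ Finset.range (p.len + 1), ∑ i ∈ Finset.range p.len,
        ∑ j ∈ Finset.range q.len, T2 R z p q l (i + k) (z.len + 1 + (p.len - k)) j := by
    refine Finset.sum_congr rfl fun l _ => ?_
    calc (∑ i ∈ Finset.range p.len, ∑ x ∈ Finset.range (p.len + 1),
            ∑ j ∈ Finset.range q.len, T2 R z p q l i (z.len + 1 + x) j)
        = ∑ i ∈ Finset.range p.len, ∑ k ∈ Finset.range (p.len + 1),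
            ∑ j ∈ Finset.range q.len, T2 R z p q l i (z.len + 1 + (p.len - k)) j := by
          refine Finset.sum_congr rfl fun i _ => ?_
          rw [← Finset.sum_range_reflect]
          exact Finset.sum_congr rfl fun k hk => by rw [Nat.add_sub_cancel]
      _ = ∑ k ∈ Finset.range (p.len + 1), ∑ i ∈ Finset.range p.len,
            ∑ j ∈ Finset.range q.len, T2 R z p q l i (z.len + 1 + (p.len - k)) j :=
          Finset.sum_comm
      _ = ∑ k ∈ Finset.range (p.len + 1), ∑ i ∈ Finset.range p.len,
            ∑ j ∈ Finset.range q.len, T2 R z p q l (i + k) (z.len + 1 + (p.len - k)) j := by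
          refine Finset.sum_congr rfl fun k _ => ?_
          exact (sum_shift p.len
            (fun x => ∑ j ∈ Finset.range q.len, T2 R z p q l x (z.len + 1 + (p.len - k)) j)
            (fun x => Finset.sum_congr rfl fun j _ =>
              T2_congr_j R z p q l x (z.len + 1 + (p.len - k)) j) k).symm
  rw [S2eq, sum4_swap]
  rw [← Finset.sum_add_distrib]
  refine Finset.sum_eq_zero fun l _ => ?_
  rw [← Finset.sum_add_distrib]
  refine Finset.sum_eq_zero fun k hk => ?_
  rw [← Finset.sum_add_distrib]
  refine Finset.sum_eq_zero fun i _ => ?_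
  rw [← Finset.sum_add_distrib]
  refine Finset.sum_eq_zero fun j _ => ?_
  exact T2_cancel R p q z i j l k (by have := Finset.mem_range.mp hk; omega)


section WithB

variable (B : ((V ⊕ Quot (RotRel s t)) →₀ R) →ₗ[R] ((V ⊕ Quot (RotRel s t)) →₀ R) →ₗ[R]
    ((V ⊕ Quot (RotRel s t)) →₀ R))
  (hBval : ∀ p q : RawLoop s t, B (eL R p) (eL R q)
      = ∑ i ∈ Finset.range p.len, ∑ j ∈ Finset.range q.len, insTerm R s t p q i j)

include hBval

lemma B_insTerm (p q z : RawLoop s t) (i j : ℕ) :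
    B (insTerm R s t p q i j) (eL R z)
      = ∑ k ∈ Finset.range (p.len + q.len + 2), ∑ l ∈ Finset.range z.len,
          T2 R p q z i j k l := by
  by_cases h : ∀ r, dtgt s t (insSeq s t p q i j r) = dsrc s t (insSeq s t p q i j (r + 1))
  · rw [insTerm_pos R p q i j h, map_zsmul, LinearMap.smul_apply,
      hBval (insLoop p q i j h) z]
    simp only [insLoop_len]
    rw [Finset.smul_sum]
    refine Finset.sum_congr rfl fun k _ => ?_
    rw [Finset.smul_sum]
    refine Finset.sum_congr rfl fun l _ => ?_
    unfold T2
    rw [dif_pos h]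
  · rw [insTerm_neg R p q i j h, map_zero, LinearMap.zero_apply]
    symm
    refine Finset.sum_eq_zero fun k _ => Finset.sum_eq_zero fun l _ => ?_
    unfold T2
    rw [dif_neg h]

lemma jac_loops (p q z : RawLoop s t) :
    B (B (eL R p) (eL R q)) (eL R z) + B (B (eL R q) (eL R z)) (eL R p)
      + B (B (eL R z) (eL R p)) (eL R q) = 0 := by
  have expand : ∀ a b c : RawLoop s t,
      B (B (eL R a) (eL R b)) (eL R c)
        = (∑ i ∈ Finset.range a.len, ∑ j ∈ Finset.range b.len, ∑ k ∈ Finset.range (a.len + 1),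
            ∑ l ∈ Finset.range c.len, T2 R a b c i j k l)
          + (∑ i ∈ Finset.range a.len, ∑ j ∈ Finset.range b.len, ∑ x ∈ Finset.range (b.len + 1),
            ∑ l ∈ Finset.range c.len, T2 R a b c i j (a.len + 1 + x) l) := by
    intro a b c
    rw [hBval a b, map_sum, LinearMap.sum_apply, ← Finset.sum_add_distrib]
    refine Finset.sum_congr rfl fun i _ => ?_
    rw [map_sum, LinearMap.sum_apply, ← Finset.sum_add_distrib]
    refine Finset.sum_congr rfl fun j _ => ?_
    rw [B_insTerm R B hBval a b c i j,
      show a.len + b.len + 2 = (a.len + 1) + (b.len + 1) by omega,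
      Finset.sum_range_add]
  rw [expand p q z, expand q z p, expand z p q]
  linear_combination (norm := abel) pair_sum R p q z + pair_sum R q z p + pair_sum R z p q

end WithB

end ModuleLemmas

/-- The augmented necklace bracket `br⁺` — the bilinear operation on the free module `N`
on constant and cyclic paths of the double quiver which vanishes on constant paths and on
cyclic paths is given by
`br⁺(a₁⋯a_m ⊗ b₁⋯b_n) = ∑_{i,j} ⟨a_i, b_j⟩ a_i a_{i+1}⋯a_{i-1} a_i b_j b_{j+1}⋯b_{j-1} b_j`
— is antisymmetric and satisfies the Jacobi identity, i.e. `(N, br⁺)` is a Lie algebra. -/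
theorem stmt_8 [DecidableEq E] (s t : E → V) (R : Type*) [CommRing R] [Invertible (2 : R)]
    (B : ((V ⊕ Quot (RotRel s t)) →₀ R) →ₗ[R] ((V ⊕ Quot (RotRel s t)) →₀ R) →ₗ[R]
      ((V ⊕ Quot (RotRel s t)) →₀ R))
    (hBv₁ : ∀ (v : V) (y : (V ⊕ Quot (RotRel s t)) →₀ R),
      B (Finsupp.single (Sum.inl v) 1) y = 0)
    (hBv₂ : ∀ (x : (V ⊕ Quot (RotRel s t)) →₀ R) (v : V),
      B x (Finsupp.single (Sum.inl v) 1) = 0)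
    (hBval : ∀ p q : RawLoop s t,
      B (Finsupp.single (Sum.inr (Quot.mk (RotRel s t) p)) 1)
        (Finsupp.single (Sum.inr (Quot.mk (RotRel s t) q)) 1) =
      ∑ i ∈ Finset.range p.len, ∑ j ∈ Finset.range q.len, insTerm R s t p q i j) :
    (∀ x, B x x = 0) ∧ (∀ x y, B x y = - B y x) ∧
      (∀ x y z, B (B x y) z + B (B y z) x + B (B z x) y = 0) := by
  have hBval' : ∀ p q : RawLoop s t, B (eL R p) (eL R q)
      = ∑ i ∈ Finset.range p.len, ∑ j ∈ Finset.range q.len, insTerm R s t p q i j := hBval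
  -- antisymmetry
  have hanti : ∀ x y, B x y = - B y x := by
    have hsingle : ∀ a b : V ⊕ Quot (RotRel s t),
        B (Finsupp.single a (1 : R)) (Finsupp.single b 1)
          = - B (Finsupp.single b 1) (Finsupp.single a 1) := by
      intro a b
      rcases a with v | c
      · rw [hBv₁, hBv₂, neg_zero]
      rcases b with v | c'
      · rw [hBv₁, hBv₂, neg_zero]
      obtain ⟨p, rfl⟩ := Quot.exists_rep c
      obtain ⟨q, rfl⟩ := Quot.exists_rep c'
      show B (eL R p) (eL R q) = - B (eL R q) (eL R p)
      rw [hBval' p q, hBval' q p]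
      calc ∑ i ∈ Finset.range p.len, ∑ j ∈ Finset.range q.len, insTerm R s t p q i j
          = ∑ i ∈ Finset.range p.len, ∑ j ∈ Finset.range q.len, -insTerm R s t q p j i := by
            refine Finset.sum_congr rfl fun i _ => Finset.sum_congr rfl fun j _ => ?_
            rw [insTerm_swap R p q i j, neg_neg]
        _ = - ∑ i ∈ Finset.range p.len, ∑ j ∈ Finset.range q.len, insTerm R s t q p j i := by
            simp
        _ = - ∑ j ∈ Finset.range q.len, ∑ i ∈ Finset.range p.len, insTerm R s t q p j i := by
            rw [Finset.sum_comm]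
    intro x y
    induction x using Finsupp.induction_linear with
    | zero => simp
    | add f g hf hg =>
      rw [map_add, LinearMap.add_apply, hf, hg, map_add, neg_add]
    | single a r =>
      induction y using Finsupp.induction_linear with
      | zero => simp
      | add f g hf hg =>
        rw [map_add, hf, hg, map_add, LinearMap.add_apply, neg_add]
      | single b r' =>
        rw [show (Finsupp.single a r : (V ⊕ Quot (RotRel s t)) →₀ R) = r • Finsupp.single a 1 by
            rw [Finsupp.smul_single, smul_eq_mul, mul_one],
          show (Finsupp.single b r' : (V ⊕ Quot (RotRel s t)) →₀ R) = r' • Finsupp.single b 1 by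
            rw [Finsupp.smul_single, smul_eq_mul, mul_one]]
        simp only [map_smul, LinearMap.smul_apply]
        rw [hsingle a b, smul_neg, smul_neg, smul_comm]
  -- alternating
  have halt : ∀ x, B x x = 0 := by
    intro x
    have h := hanti x x
    have h2 : (2 : R) • B x x = 0 := by
      rw [two_smul]
      exact add_eq_zero_iff_eq_neg.mpr h
    calc B x x = ⅟(2 : R) • ((2 : R) • B x x) := by
          rw [smul_smul, invOf_mul_self, one_smul]
      _ = 0 := by rw [h2, smul_zero]
  -- Jacobi
  have hjac : ∀ x y z, B (B x y) z + B (B y z) x + B (B z x) y = 0 := by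
    have hsingle3 : ∀ a b c : V ⊕ Quot (RotRel s t),
        B (B (Finsupp.single a (1 : R)) (Finsupp.single b 1)) (Finsupp.single c 1)
          + B (B (Finsupp.single b 1) (Finsupp.single c 1)) (Finsupp.single a 1)
          + B (B (Finsupp.single c 1) (Finsupp.single a 1)) (Finsupp.single b 1) = 0 := by
      intro a b c
      rcases a with v | ca
      · rw [hBv₁, map_zero, LinearMap.zero_apply, hBv₂, hBv₂, map_zero, LinearMap.zero_apply]
        simp
      rcases b with v | cb
      · rw [hBv₂, map_zero, LinearMap.zero_apply, hBv₁, map_zero, LinearMap.zero_apply, hBv₂]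
        simp
      rcases c with v | cc
      · rw [hBv₂, hBv₂, map_zero, LinearMap.zero_apply, hBv₁, map_zero, LinearMap.zero_apply]
        simp
      obtain ⟨p, rfl⟩ := Quot.exists_rep ca
      obtain ⟨q, rfl⟩ := Quot.exists_rep cb
      obtain ⟨z, rfl⟩ := Quot.exists_rep cc
      exact jac_loops R B hBval' p q z
    intro x y z
    induction x using Finsupp.induction_linear with
    | zero => simp
    | add f g hf hg =>
      simp only [map_add, LinearMap.add_apply]
      linear_combination (norm := abel) hf + hg
    | single a r =>
      induction y using Finsupp.induction_linear with
      | zero => simp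
      | add f g hf hg =>
        simp only [map_add, LinearMap.add_apply]
        linear_combination (norm := abel) hf + hg
      | single b r' =>
        induction z using Finsupp.induction_linear with
        | zero => simp
        | add f g hf hg =>
          simp only [map_add, LinearMap.add_apply]
          linear_combination (norm := abel) hf + hg
        | single c r'' =>
          rw [show (Finsupp.single a r : (V ⊕ Quot (RotRel s t)) →₀ R) = r • Finsupp.single a 1 by
              rw [Finsupp.smul_single, smul_eq_mul, mul_one],
            show (Finsupp.single b r' : (V ⊕ Quot (RotRel s t)) →₀ R) = r' • Finsupp.single b 1 by
              rw [Finsupp.smul_single, smul_eq_mul, mul_one],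
            show (Finsupp.single c r'' : (V ⊕ Quot (RotRel s t)) →₀ R) = r'' • Finsupp.single c 1 by
              rw [Finsupp.smul_single, smul_eq_mul, mul_one]]
          simp only [map_smul, LinearMap.smul_apply, map_smul]
          simp only [smul_smul]
          rw [show r * (r'' * r') = r'' * (r' * r) by ring,
            show r' * (r * r'') = r'' * (r' * r) by ring,
            ← smul_add, ← smul_add, hsingle3 a b c, smul_zero]
  exact ⟨halt, hanti, hjac⟩
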